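/- Let Γ > 0, n_E > 0 and n > 0 be real numbers. Then the set { h₁₁²·Γ(1+n_E)·n + h₂₂²·Γn_E·(n+1) : h₁₁, h₂₂ ∈ ℝ with 1 + h₁₁·Γ(1+n_E) + h₂₂·Γn_E = 0 } has least element n(n+1)/(Γ((n+1)(1+2n_E) − n_E)), which equals n/(Γ(1 + 2n_E − n_E/(n+1))). -/

import Mathlib

/-- Optimization over the free parameters `h₁₁, h₂₂` in the Lindblad-space bound
for frequency estimation of a bosonic mode coupled to a thermal bath. -/
theorem frequency_bound_optimization (Γ nE n : ℝ) (hΓ : 0 < Γ) (hnE : 0 < nE) (hn : 0 < n) :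
    IsLeast
      {x : ℝ | ∃ h₁₁ h₂₂ : ℝ,
        1 + h₁₁ * (Γ * (1 + nE)) + h₂₂ * (Γ * nE) = 0 ∧
        x = h₁₁ ^ 2 * (Γ * (1 + nE)) * n + h₂₂ ^ 2 * (Γ * nE) * (n + 1)}
      (n * (n + 1) / (Γ * ((n + 1) * (1 + 2 * nE) - nE)))
    ∧ n * (n + 1) / (Γ * ((n + 1) * (1 + 2 * nE) - nE))
        = n / (Γ * (1 + 2 * nE - nE / (n + 1))) := by
  have hD : 0 < Γ * ((n + 1) * (1 + 2 * nE) - nE) := by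
    have : 0 < (n + 1) * (1 + 2 * nE) - nE := by nlinarith
    exact mul_pos hΓ this
  have hD' : Γ * ((n + 1) * (1 + 2 * nE) - nE) ≠ 0 := ne_of_gt hD
  refine ⟨⟨⟨-(n + 1) / (Γ * ((n + 1) * (1 + 2 * nE) - nE)),
    -n / (Γ * ((n + 1) * (1 + 2 * nE) - nE)), ?_, ?_⟩, ?_⟩, ?_⟩
  · have hE : (n + 1) * (1 + 2 * nE) - nE ≠ 0 := ne_of_gt (by nlinarith)
    field_simp
    ring
  · have hE : (n + 1) * (1 + 2 * nE) - nE ≠ 0 := ne_of_gt (by nlinarith)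
    field_simp
    ring
  · rintro x ⟨h₁, h₂, hc, rfl⟩
    rw [div_le_iff₀ hD]
    have hab : 0 < (Γ * (1 + nE)) * (Γ * nE) := by positivity
    have hsq : (h₁ * (Γ * (1 + nE)) + h₂ * (Γ * nE)) ^ 2 = 1 := by
      have : h₁ * (Γ * (1 + nE)) + h₂ * (Γ * nE) = -1 := by linarith
      rw [this]; norm_num
    have hsq' : n * (n + 1) * (h₁ * (Γ * (1 + nE)) + h₂ * (Γ * nE)) ^ 2 = n * (n + 1) := by
      rw [hsq]; ring
    nlinarith [mul_nonneg hab.le (sq_nonneg (n * h₁ - (n + 1) * h₂)), hsq']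
  · have hn1 : (n + 1) ≠ 0 := by positivity
    have h2 : 0 < 1 + 2 * nE - nE / (n + 1) := by
      have : nE / (n + 1) < 1 + 2 * nE := by
        rw [div_lt_iff₀ (by positivity : (0:ℝ) < n + 1)]; nlinarith
      linarith
    rw [div_eq_div_iff hD' (ne_of_gt (mul_pos hΓ h2))]
    field_simp
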